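/- For all w ∈ ℍ, all m ∈ ℤ and all integers s ≥ 0 one has the exact identity S₁(w + m·2^s) = S₁(w) + Δ_{m,s}(w) + c_m, where Δ_{m,s}(w) = ∑_{l=1}^∞ (e(w/2^{l+s}) − 1)(e(m/2^l) − 1). Moreover, for every compact K ⊂ ℍ and every m ∈ ℤ there is a constant C such that |Δ_{m,s}(w)| ≤ C·2^{−s} for all w ∈ K and all s ≥ 0. -/

import Mathlib

/-- `e(w) = exp(2πiw)`. -/
noncomputable def e (w : ℂ) : ℂ := Complex.exp (2 * Real.pi * Complex.I * w)

/-- The Fredholm series `f(z) = ∑_{n=0}^∞ z^{2^n}`. -/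
noncomputable def f (z : ℂ) : ℂ := ∑' n : ℕ, z ^ (2 ^ n)

/-- `F(w) = f(e(w)) = ∑_{n=0}^∞ e(2^n w)` on the upper half-plane. -/
noncomputable def F (w : ℂ) : ℂ := ∑' n : ℕ, e ((2 ^ n : ℕ) * w)

/-- `G(w) = ∑_{l=1}^∞ e(−1/2^l)(e(w/2^l) − 1)` (indexing: `l = l' + 1`, `l' : ℕ`). -/
noncomputable def G (w : ℂ) : ℂ :=
  ∑' l : ℕ, e (-(1 / 2 ^ (l + 1))) * (e (w / 2 ^ (l + 1)) - 1)

/-- `S = F + G` on the upper half-plane. -/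
noncomputable def S (w : ℂ) : ℂ := F w + G w

/-- The upper half-plane `ℍ = {w : ℂ | Im w > 0}`. -/
def UHP : Set ℂ := {w : ℂ | 0 < w.im}

/-- `V = S(ℍ)`, the image of `S` on the upper half-plane. -/
noncomputable def V : Set ℂ := S '' UHP

/-- `S₁(w) = S(w+1)`. -/
noncomputable def S₁ (w : ℂ) : ℂ := S (w + 1)

/-- `c_m = ∑_{l=1}^∞ (e(m/2^l) − 1)` (indexing: `l = l' + 1`, `l' : ℕ`). -/
noncomputable def c (m : ℤ) : ℂ := ∑' l : ℕ, (e ((m : ℂ) / 2 ^ (l + 1)) - 1)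

/-- `Δ_{m,s}(w) = ∑_{l=1}^∞ (e(w/2^{l+s}) − 1)(e(m/2^l) − 1)`. -/
noncomputable def Δ (m : ℤ) (s : ℕ) (w : ℂ) : ℂ :=
  ∑' l : ℕ, (e (w / 2 ^ (l + 1 + s)) - 1) * (e ((m : ℂ) / 2 ^ (l + 1)) - 1)

section Helpers

open Complex Real

-- general bound |exp z - 1| ≤ 2|z| e^{|z|}
lemma abs_exp_sub_one_le' (z : ℂ) :
    ‖Complex.exp z - 1‖ ≤ 2 * ‖z‖ * Real.exp (‖z‖) := by
  set n : ℕ := ⌈‖z‖⌉₊ + 1 with hn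
  have hnpos : (0:ℝ) < n := by positivity
  have hzn : ‖z‖ ≤ n := (Nat.le_ceil _).trans (by exact_mod_cast Nat.le_succ _)
  have habsdiv : ‖z / n‖ = ‖z‖ / n := by
    rw [norm_div, Complex.norm_natCast]
  have h1 : ‖z / n‖ ≤ 1 := by
    rw [habsdiv, div_le_one hnpos]; exact hzn
  have key : Complex.exp z - 1
      = (∑ i ∈ Finset.range n, Complex.exp (z/n) ^ i) * (Complex.exp (z/n) - 1) := by
    rw [geom_sum_mul, ← Complex.exp_nat_mul]
    congr 2
    field_simp [show (n:ℂ) ≠ 0 by exact_mod_cast hnpos.ne']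
  rw [key, norm_mul]
  have h2 : ‖Complex.exp (z/n) - 1‖ ≤ 2 * (‖z‖ / n) := by
    have := Complex.norm_exp_sub_one_le h1
    rwa [habsdiv] at this
  have h3 : ‖∑ i ∈ Finset.range n, Complex.exp (z/n) ^ i‖
      ≤ n * Real.exp (‖z‖) := by
    calc ‖∑ i ∈ Finset.range n, Complex.exp (z/n) ^ i‖
        ≤ ∑ i ∈ Finset.range n, ‖Complex.exp (z/n) ^ i‖ :=
          norm_sum_le _ _
      _ ≤ ∑ _i ∈ Finset.range n, Real.exp (‖z‖) := by
          apply Finset.sum_le_sum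
          intro i hi
          rw [norm_pow, Complex.norm_exp, ← Real.exp_nat_mul]
          apply Real.exp_le_exp.2
          have hre : (z/n).re ≤ ‖z‖ / n := by
            calc (z/n).re ≤ ‖z/n‖ := Complex.re_le_norm _
              _ = ‖z‖ / n := habsdiv
          calc (i:ℝ) * (z/n).re ≤ (i:ℝ) * (‖z‖ / n) := by
                apply mul_le_mul_of_nonneg_left hre (by positivity)
            _ ≤ (n:ℝ) * (‖z‖ / n) := by
                apply mul_le_mul_of_nonneg_right _ (by positivity)
                exact_mod_cast (Finset.mem_range.1 hi).le
            _ = ‖z‖ := by field_simp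
      _ = n * Real.exp (‖z‖) := by
          rw [Finset.sum_const, Finset.card_range, nsmul_eq_mul]
  calc ‖∑ i ∈ Finset.range n, Complex.exp (z/n) ^ i‖
        * ‖Complex.exp (z/n) - 1‖
      ≤ (n * Real.exp (‖z‖)) * (2 * (‖z‖ / n)) := by
        apply mul_le_mul h3 h2 (by positivity) (by positivity)
    _ = 2 * ‖z‖ * Real.exp (‖z‖) := by field_simp

lemma e_add (a b : ℂ) : e (a + b) = e a * e b := by
  simp only [e, ← Complex.exp_add]; congr 1; ring

lemma e_int (k : ℤ) : e (k : ℂ) = 1 := by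
  rw [e, show 2 * (Real.pi:ℂ) * Complex.I * (k:ℂ) = (k:ℂ) * (2 * Real.pi * Complex.I) by ring,
    Complex.exp_int_mul_two_pi_mul_I]

lemma abs_two_pi_I_mul (z : ℂ) :
    ‖2 * (Real.pi:ℂ) * Complex.I * z‖ = 2 * Real.pi * ‖z‖ := by
  simp [norm_mul, Complex.norm_two, Complex.norm_I, Complex.norm_real, _root_.abs_of_nonneg Real.pi_pos.le]

lemma abs_e_le (z : ℂ) : ‖e z‖ ≤ Real.exp (2 * Real.pi * ‖z‖) := by
  rw [e, Complex.norm_exp]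
  apply Real.exp_le_exp.2
  have h1 : (2 * (Real.pi:ℂ) * Complex.I * z).re ≤ ‖2 * (Real.pi:ℂ) * Complex.I * z‖ :=
    Complex.re_le_norm _
  rwa [abs_two_pi_I_mul] at h1

/-- key geometric bound -/
lemma e_div_pow_bound {a : ℂ} {R : ℝ} (hR : ‖a‖ ≤ R) (k : ℕ) :
    ‖e (a / 2 ^ k) - 1‖
      ≤ (4 * Real.pi * R * Real.exp (2 * Real.pi * R)) * (1/2 : ℝ) ^ k := by
  have hR0 : 0 ≤ R := (norm_nonneg a).trans hR
  have habs : ‖a / 2 ^ k‖ = ‖a‖ * (1/2:ℝ)^k := by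
    rw [norm_div, norm_pow, Complex.norm_two]
    rw [div_eq_mul_inv, one_div, inv_pow]
  have h1 : ‖a / 2^k‖ ≤ R * (1/2:ℝ)^k := by
    rw [habs]; exact mul_le_mul_of_nonneg_right hR (by positivity)
  have h2 : ‖a / 2^k‖ ≤ R := by
    refine h1.trans ?_
    calc R * (1/2:ℝ)^k ≤ R * 1 := by
          apply mul_le_mul_of_nonneg_left _ hR0
          exact pow_le_one₀ (by norm_num) (by norm_num)
      _ = R := mul_one R
  calc ‖e (a / 2 ^ k) - 1‖
      ≤ 2 * ‖2 * (Real.pi:ℂ) * Complex.I * (a / 2^k)‖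
          * Real.exp (‖2 * (Real.pi:ℂ) * Complex.I * (a / 2^k)‖) :=
        abs_exp_sub_one_le' _
    _ = 2 * (2 * Real.pi * ‖a / 2^k‖)
          * Real.exp (2 * Real.pi * ‖a / 2^k‖) := by rw [abs_two_pi_I_mul]
    _ ≤ 2 * (2 * Real.pi * (R * (1/2:ℝ)^k)) * Real.exp (2 * Real.pi * R) := by
        gcongr
    _ = (4 * Real.pi * R * Real.exp (2 * Real.pi * R)) * (1/2 : ℝ) ^ k := by ring

lemma summable_of_geom_bound {f : ℕ → ℂ} (M : ℝ)
    (h : ∀ l, ‖f l‖ ≤ M * (1/2:ℝ) ^ l) : Summable f := by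
  apply Summable.of_norm_bounded (g := fun l => M * (1/2:ℝ)^l)
    ((summable_geometric_of_lt_one (by norm_num) (by norm_num)).mul_left M)
  intro l
  simpa using h l

lemma tsum_shift {f : ℕ → ℂ} (s : ℕ) (hf : Summable f) (h0 : ∀ k, k < s → f k = 0) :
    ∑' n, f n = ∑' n, f (n + s) := by
  have h := hf.sum_add_tsum_nat_add s
  rw [Finset.sum_eq_zero (fun i hi => h0 i (Finset.mem_range.1 hi)), zero_add] at h
  exact h.symm

/-- geometric-bound constant -/

noncomputable def B (R : ℝ) : ℝ := 4 * Real.pi * R * Real.exp (2 * Real.pi * R)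

lemma B_nonneg {R : ℝ} (h : 0 ≤ R) : 0 ≤ B R := by unfold B; positivity

lemma e_bound' (a : ℂ) (k : ℕ) :
    ‖e (a / 2 ^ k) - 1‖ ≤ B (‖a‖) * (1/2:ℝ)^k :=
  e_div_pow_bound le_rfl k

lemma summable_c_terms (m : ℤ) (s : ℕ) :
    Summable (fun l : ℕ => e ((m:ℂ) / 2 ^ (l + 1 + s)) - 1) := by
  apply summable_of_geom_bound (B (‖(m:ℂ)‖))
  intro l
  calc ‖e ((m:ℂ) / 2 ^ (l + 1 + s)) - 1‖
      ≤ B (‖(m:ℂ)‖) * (1/2:ℝ)^(l+1+s) := e_bound' _ _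
    _ ≤ B (‖(m:ℂ)‖) * (1/2:ℝ)^l := by
        apply mul_le_mul_of_nonneg_left _ (B_nonneg (norm_nonneg _))
        apply pow_le_pow_of_le_one (by norm_num) (by norm_num) (by omega)

lemma summable_delta_terms (m : ℤ) (s : ℕ) (w : ℂ) :
    Summable (fun l : ℕ => (e (w / 2 ^ (l + 1 + s)) - 1) * (e ((m:ℂ) / 2 ^ (l + 1)) - 1)) := by
  apply summable_of_geom_bound (B (‖w‖) * (2 * B (‖(m:ℂ)‖)))
  intro l
  rw [norm_mul]
  have h1 := e_bound' w (l + 1 + s)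
  have h2 := e_bound' (m:ℂ) (l + 1)
  have hBw := B_nonneg (norm_nonneg w)
  have hBm := B_nonneg (norm_nonneg (m:ℂ))
  have e1 : (1/2:ℝ)^(l+1+s) ≤ (1/2:ℝ)^l :=
    pow_le_pow_of_le_one (by norm_num) (by norm_num) (by omega)
  have e2 : (1/2:ℝ)^(l+1) ≤ 2 := by
    calc (1/2:ℝ)^(l+1) ≤ 1 := pow_le_one₀ (by norm_num) (by norm_num)
      _ ≤ 2 := by norm_num
  calc ‖e (w / 2 ^ (l + 1 + s)) - 1‖ * ‖e ((m:ℂ) / 2 ^ (l + 1)) - 1‖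
      ≤ (B (‖w‖) * (1/2:ℝ)^(l+1+s)) * (B (‖(m:ℂ)‖) * (1/2:ℝ)^(l+1)) := by
        apply mul_le_mul h1 h2 (norm_nonneg _) (by positivity)
    _ ≤ (B (‖w‖) * (1/2:ℝ)^l) * (B (‖(m:ℂ)‖) * 2) := by
        apply mul_le_mul _ _ (by positivity) (by positivity)
        · exact mul_le_mul_of_nonneg_left e1 hBw
        · exact mul_le_mul_of_nonneg_left e2 hBm
    _ = B (‖w‖) * (2 * B (‖(m:ℂ)‖)) * (1/2:ℝ)^l := by ring

lemma summable_G_terms (u : ℂ) :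
    Summable (fun l : ℕ => e (-(1 / 2 ^ (l + 1))) * (e (u / 2 ^ (l + 1)) - 1)) := by
  apply summable_of_geom_bound (Real.exp (2 * Real.pi) * B (‖u‖))
  intro l
  rw [norm_mul]
  have h1 : ‖e (-(1 / 2 ^ (l + 1) : ℂ))‖ ≤ Real.exp (2 * Real.pi) := by
    refine (abs_e_le _).trans ?_
    apply Real.exp_le_exp.2
    have : ‖-(1 / 2 ^ (l + 1) : ℂ)‖ ≤ 1 := by
      rw [norm_neg, norm_div, norm_one, norm_pow, Complex.norm_two,
        div_le_one (by positivity)]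
      exact one_le_pow₀ (by norm_num)
    nlinarith [Real.pi_pos]
  have h2 := e_bound' u (l + 1)
  have hBu := B_nonneg (norm_nonneg u)
  calc ‖e (-(1 / 2 ^ (l + 1) : ℂ))‖ * ‖e (u / 2 ^ (l + 1)) - 1‖
      ≤ Real.exp (2 * Real.pi) * (B (‖u‖) * (1/2:ℝ)^(l+1)) := by
        apply mul_le_mul h1 h2 (norm_nonneg _) (Real.exp_pos _).le
    _ ≤ Real.exp (2 * Real.pi) * (B (‖u‖) * (1/2:ℝ)^l) := by
        apply mul_le_mul_of_nonneg_left _ (Real.exp_pos _).le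
        apply mul_le_mul_of_nonneg_left _ hBu
        apply pow_le_pow_of_le_one (by norm_num) (by norm_num) (by omega)
    _ = Real.exp (2 * Real.pi) * B (‖u‖) * (1/2:ℝ)^l := by ring

theorem part1 : ∀ w ∈ UHP, ∀ m : ℤ, ∀ s : ℕ,
      S₁ (w + (m : ℂ) * 2 ^ s) = S₁ w + Δ m s w + c m := by
  intro w _ m s
  set t : ℂ := (m:ℂ) * 2 ^ s with ht
  set u : ℂ := w + 1 with hu
  have harg : w + t + 1 = u + t := by ring
  have hF : F (u + t) = F u := by
    unfold F
    apply tsum_congr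
    intro n
    have : ((2^n : ℕ) : ℂ) * (u + t) = (2^n : ℕ) * u + ((2^n * m * 2^s : ℤ) : ℂ) := by
      push_cast; ring
    rw [this, e_add, e_int, mul_one]
  -- h l : the correction terms
  set h : ℕ → ℂ := fun l => e (-(1 / 2 ^ (l + 1))) * e (u / 2 ^ (l + 1)) * (e (t / 2 ^ (l + 1)) - 1)
    with hh
  have hterm : ∀ l : ℕ, e (-(1 / 2 ^ (l + 1))) * (e ((u + t) / 2 ^ (l + 1)) - 1)
      = e (-(1 / 2 ^ (l + 1))) * (e (u / 2 ^ (l + 1)) - 1) + h l := by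
    intro l
    have he : e ((u + t) / 2 ^ (l + 1)) = e (u / 2 ^ (l + 1)) * e (t / 2 ^ (l + 1)) := by
      rw [← e_add]; congr 1; ring
    rw [he, hh]; ring
  have sum1 := summable_G_terms u
  have sum2 := summable_G_terms (u + t)
  have sumh : Summable h := by
    have : h = fun l => e (-(1 / 2 ^ (l + 1))) * (e ((u+t) / 2 ^ (l + 1)) - 1)
        - e (-(1 / 2 ^ (l + 1))) * (e (u / 2 ^ (l + 1)) - 1) := by
      funext l
      rw [hterm l]; ring
    rw [this]
    exact sum2.sub sum1
  have hG : G (u + t) = G u + ∑' l, h l := by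
    unfold G
    rw [tsum_congr hterm, sum1.tsum_add sumh]
  -- vanishing below s
  have hvanish : ∀ k, k < s → h k = 0 := by
    intro k hk
    have hpow : (2:ℂ)^s = 2^(k+1) * 2^(s-(k+1)) := by
      rw [← pow_add]; congr 1; omega
    have harg2 : t / 2^(k+1) = ((m * 2^(s-(k+1)) : ℤ) : ℂ) := by
      rw [ht, hpow]
      push_cast
      field_simp
    rw [hh]
    simp only [harg2, e_int, sub_self, mul_zero]
  have hshift : ∑' l, h l = ∑' l, h (l + s) := tsum_shift s sumh hvanish
  -- identify shifted terms
  have hterm2 : ∀ l : ℕ, h (l + s)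
      = (e (w / 2 ^ (l + 1 + s)) - 1) * (e ((m:ℂ) / 2 ^ (l + 1)) - 1)
        + (e ((m:ℂ) / 2 ^ (l + 1)) - 1) := by
    intro l
    have e1 : e (-(1 / 2 ^ (l + s + 1))) * e (u / 2 ^ (l + s + 1)) = e (w / 2 ^ (l + 1 + s)) := by
      rw [← e_add]; congr 1
      rw [hu]
      have : l + 1 + s = l + s + 1 := by omega
      rw [this]; ring
    have e2 : t / 2 ^ (l + s + 1) = (m:ℂ) / 2 ^ (l + 1) := by
      rw [ht]
      have hpow : (2:ℂ)^(l+s+1) = 2^(l+1) * 2^s := by rw [← pow_add]; congr 1; omega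
      rw [hpow]
      field_simp
    rw [hh]
    simp only []
    rw [e1, e2]
    ring
  have hsplit : ∑' l, h (l + s) = Δ m s w + c m := by
    rw [tsum_congr hterm2, Δ, c,
      (summable_delta_terms m s w).tsum_add (summable_c_terms m 0)]
  show S (w + t + 1) = S (w + 1) + Δ m s w + c m
  rw [harg, ← hu]
  show F (u + t) + G (u + t) = F u + G u + Δ m s w + c m
  rw [hF, hG, hshift, hsplit]
  ring

theorem part1' : True := trivial

theorem part2 : ∀ K : Set ℂ, IsCompact K → K ⊆ UHP → ∀ m : ℤ,
      ∃ C : ℝ, ∀ w ∈ K, ∀ s : ℕ, ‖Δ m s w‖ ≤ C * 2 ^ (-(s : ℝ)) := by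
  intro K hK _ m
  obtain ⟨R0, hR0⟩ := hK.isBounded.subset_closedBall 0
  set R : ℝ := max R0 0 with hR
  have hRnn : 0 ≤ R := le_max_right _ _
  have hwR : ∀ w ∈ K, ‖w‖ ≤ R := by
    intro w hw
    have := hR0 hw
    rw [Metric.mem_closedBall, Complex.dist_eq, sub_zero] at this
    exact this.trans (le_max_left _ _)
  set Bm : ℝ := B (‖(m:ℂ)‖) with hBm
  have hBmnn : 0 ≤ Bm := B_nonneg (norm_nonneg _)
  have hBRnn : 0 ≤ B R := B_nonneg hRnn
  refine ⟨B R * Bm * (4/3), ?_⟩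
  intro w hw s
  set D : ℝ := B R * Bm * (1/2:ℝ)^s with hD
  have hDnn : 0 ≤ D := by positivity
  have hgeom : HasSum (fun l : ℕ => D * (1/4:ℝ)^l) (D * (1 - 1/4)⁻¹) :=
    (hasSum_geometric_of_lt_one (by norm_num) (by norm_num)).mul_left D
  have hbound : ∀ l : ℕ,
      ‖(e (w / 2 ^ (l + 1 + s)) - 1) * (e ((m:ℂ) / 2 ^ (l + 1)) - 1)‖ ≤ D * (1/4:ℝ)^l := by
    intro l
    rw [norm_mul,
      show ((1/4:ℝ))^l = (1/2:ℝ)^l * (1/2:ℝ)^l by rw [← mul_pow]; norm_num]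
    have h1 := e_div_pow_bound (hwR w hw) (l + 1 + s)
    have h2 := e_bound' (m:ℂ) (l + 1)
    calc ‖e (w / 2 ^ (l + 1 + s)) - 1‖ * ‖e ((m:ℂ) / 2 ^ (l + 1)) - 1‖
        ≤ (B R * (1/2:ℝ)^(l+1+s)) * (Bm * (1/2:ℝ)^(l+1)) := by
          apply mul_le_mul h1 h2 (norm_nonneg _) (by positivity)
      _ = (B R * Bm * (1/2:ℝ)^s * ((1/2:ℝ)^l*(1/2:ℝ)^l)) * ((1/2)*(1/2)) := by ring
      _ ≤ (B R * Bm * (1/2:ℝ)^s * ((1/2:ℝ)^l*(1/2:ℝ)^l)) * 1 := by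
          apply mul_le_mul_of_nonneg_left (by norm_num) (by positivity)
      _ = D * ((1/2:ℝ)^l * (1/2:ℝ)^l) := by rw [hD]; ring
  have key : ‖Δ m s w‖ ≤ D * (1 - 1/4)⁻¹ := by
    rw [Δ]
    exact tsum_of_norm_bounded hgeom hbound
  refine key.trans ?_
  have hrpow : (2:ℝ) ^ (-(s:ℝ)) = (1/2:ℝ)^s := by
    rw [Real.rpow_neg (by norm_num), Real.rpow_natCast, one_div, inv_pow]
  rw [hrpow]
  rw [hD]
  ring_nf
  nlinarith [pow_nonneg (by norm_num : (0:ℝ) ≤ 1/2) s, hBRnn, hBmnn,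
    mul_nonneg (mul_nonneg hBRnn hBmnn) (pow_nonneg (by norm_num : (0:ℝ) ≤ 1/2) s)]

/-- `S₁(w + m·2^s) = S₁(w) + Δ_{m,s}(w) + c_m` on `ℍ`, and on every compact `K ⊂ ℍ`,
for each fixed `m`, `|Δ_{m,s}(w)| ≤ C·2^(−s)` uniformly. -/
theorem S_one_translation_identity :
    (∀ w ∈ UHP, ∀ m : ℤ, ∀ s : ℕ,
      S₁ (w + (m : ℂ) * 2 ^ s) = S₁ w + Δ m s w + c m) ∧
    (∀ K : Set ℂ, IsCompact K → K ⊆ UHP → ∀ m : ℤ,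
      ∃ C : ℝ, ∀ w ∈ K, ∀ s : ℕ, ‖Δ m s w‖ ≤ C * 2 ^ (-(s : ℝ))) := by
  exact ⟨part1, part2⟩

end Helpers
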